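/- Energy decay step of the three-level scheme: Let D, R, B be symmetric N×N real matrices with D positive semidefinite, R − (1/4)D positive semidefinite, and B positive definite, let τ > 0, and let c^{n+1}, c^n, c^{n−1}, F ∈ ℝ^N satisfy B (c^{n+1} − c^{n−1})/(2τ) + R (c^{n+1} − 2c^n + c^{n−1}) + D c^n = F. Define E^n = ⟨(R − (1/4)D)(c^n − c^{n−1}), c^n − c^{n−1}⟩ + ⟨D (c^n + c^{n−1})/2, (c^n + c^{n−1})/2⟩ (and analogously E^{n+1}). Then E^{n+1} ≤ E^n + (τ/2) ⟨B⁻¹ F, F⟩. -/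

import Mathlib

open Matrix

private lemma symm_dot' {N : ℕ} (A : Matrix (Fin N) (Fin N) ℝ) (hA : Aᵀ = A) (x y : Fin N → ℝ) :
    A.mulVec x ⬝ᵥ y = A.mulVec y ⬝ᵥ x := by
  rw [dotProduct_comm, dotProduct_mulVec, ← mulVec_transpose, hA]

theorem energy_decay_three_level (N : ℕ)
    (D R B : Matrix (Fin N) (Fin N) ℝ)
    (hD : D.PosSemidef) (hRD : (R - (1 / 4 : ℝ) • D).PosSemidef) (hB : B.PosDef)
    (hRsymm : R.IsSymm)
    (τ : ℝ) (hτ : 0 < τ)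
    (cp cn cm F : Fin N → ℝ)
    (hscheme : (1 / (2 * τ)) • B.mulVec (cp - cm)
        + R.mulVec (cp - (2 : ℝ) • cn + cm) + D.mulVec cn = F) :
    (R - (1 / 4 : ℝ) • D).mulVec (cp - cn) ⬝ᵥ (cp - cn)
        + D.mulVec ((1 / 2 : ℝ) • (cp + cn)) ⬝ᵥ ((1 / 2 : ℝ) • (cp + cn))
      ≤ (R - (1 / 4 : ℝ) • D).mulVec (cn - cm) ⬝ᵥ (cn - cm)
          + D.mulVec ((1 / 2 : ℝ) • (cn + cm)) ⬝ᵥ ((1 / 2 : ℝ) • (cn + cm))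
          + (τ / 2) * (B⁻¹.mulVec F ⬝ᵥ F) := by
  have hDt : Dᵀ = D := by have h : D.IsSymm := by simpa using hD.isHermitian
                          exact h
  have hRt : Rᵀ = R := hRsymm
  have hBt : Bᵀ = B := by have h : B.IsSymm := by simpa using hB.isHermitian
                          exact h
  have hBinv : B.mulVec (B⁻¹.mulVec F) = F := by
    rw [mulVec_mulVec, Matrix.mul_nonsing_inv _ (isUnit_iff_ne_zero.2 hB.det_pos.ne'), one_mulVec]
  set u := cp - cm with hu
  set w := cp - (2:ℝ) • cn + cm with hw
  -- scheme dotted with u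
  have hdot : (1/(2*τ)) * (B.mulVec u ⬝ᵥ u) + R.mulVec w ⬝ᵥ u + D.mulVec cn ⬝ᵥ u = F ⬝ᵥ u := by
    have := congrArg (· ⬝ᵥ u) hscheme
    simpa [add_dotProduct, smul_dotProduct] using this
  have hdot2 : B.mulVec u ⬝ᵥ u + 2*τ*(R.mulVec w ⬝ᵥ u) + 2*τ*(D.mulVec cn ⬝ᵥ u)
      = 2*τ*(F ⬝ᵥ u) := by
    field_simp at hdot; linarith
  -- energy difference identity
  have E0 : (R - (1 / 4 : ℝ) • D).mulVec (cp - cn) ⬝ᵥ (cp - cn)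
        + D.mulVec ((1 / 2 : ℝ) • (cp + cn)) ⬝ᵥ ((1 / 2 : ℝ) • (cp + cn))
      - ((R - (1 / 4 : ℝ) • D).mulVec (cn - cm) ⬝ᵥ (cn - cm)
          + D.mulVec ((1 / 2 : ℝ) • (cn + cm)) ⬝ᵥ ((1 / 2 : ℝ) • (cn + cm)))
      = R.mulVec w ⬝ᵥ u + D.mulVec cn ⬝ᵥ u := by
    have h1 := symm_dot' R hRt cp cn
    have h2 := symm_dot' R hRt cp cm
    have h3 := symm_dot' R hRt cn cm
    have h4 := symm_dot' D hDt cp cn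
    have h5 := symm_dot' D hDt cp cm
    have h6 := symm_dot' D hDt cn cm
    simp only [hu, hw, sub_mulVec, smul_mulVec, mulVec_sub, mulVec_add, mulVec_smul,
      sub_dotProduct, add_dotProduct, smul_dotProduct, dotProduct_sub, dotProduct_add,
      dotProduct_smul, smul_eq_mul]
    ring_nf
    linarith [h1, h2, h3, h4, h5, h6]
  -- Young's inequality step
  set g := B⁻¹.mulVec F with hg
  have hpos : 0 ≤ B.mulVec (u - τ • g) ⬝ᵥ (u - τ • g) := by
    have := hB.posSemidef.dotProduct_mulVec_nonneg (u - τ • g)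
    simpa [dotProduct_comm] using this
  have hexp : B.mulVec (u - τ • g) ⬝ᵥ (u - τ • g)
      = B.mulVec u ⬝ᵥ u - 2*τ*(F ⬝ᵥ u) + τ^2 * (B⁻¹.mulVec F ⬝ᵥ F) := by
    have h7 := symm_dot' B hBt u g
    simp only [mulVec_sub, mulVec_smul, sub_dotProduct, dotProduct_sub, dotProduct_smul,
      smul_dotProduct, smul_eq_mul, hBinv, ← hg]
    rw [hBinv] at h7
    have h8 : F ⬝ᵥ g = g ⬝ᵥ F := dotProduct_comm _ _
    linear_combination (-τ)*h7 + τ^2 * h8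
  nlinarith [hpos, hexp, hdot2, E0, hτ]
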